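/- Let n ≥ 5 be odd and let G be a path on vertices v₁,…,vₙ. Let w assign weight 1 to every edge, and w' assign weight 0 to the first and last edges and 1 to all others. Then the unique core allocation of the matching game for w assigns 1 to every even-indexed vertex and 0 to every odd-indexed vertex, while the unique core allocation for w' assigns 1 to every odd-indexed vertex except v₁ and vₙ, and 0 otherwise. Consequently, any map A from weight vectors to core allocations satisfies ‖A(w) - A(w')‖₁ / ‖w - w'‖₁ = (n-2)/2. -/

import Mathlib

/-- `M` is a matching of the path `v₁ — v₂ — ⋯ — vₙ` (edge `i` joins `i` and `i+1`)
inside the induced subgraph on the vertex set `S`. -/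
def PathMatching (n : ℕ) (S : Finset ℕ) (M : Finset ℕ) : Prop :=
  M ⊆ Finset.Icc 1 (n - 1) ∧ (∀ i ∈ M, i ∈ S ∧ i + 1 ∈ S) ∧
    ∀ i ∈ M, ∀ j ∈ M, i ≠ j → i + 1 ≠ j ∧ j + 1 ≠ i

/-- The characteristic function of the matching game on the path:
maximum weight of a matching in the subgraph induced by `S`. -/
noncomputable def pathNu (n : ℕ) (w : ℕ → ℝ) (S : Finset ℕ) : ℝ :=
  sSup {t | ∃ M : Finset ℕ, PathMatching n S M ∧ t = ∑ i ∈ M, w i}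

/-- `x` is a core allocation of the matching game on the path with weights `w`. -/
def InCore (n : ℕ) (w : ℕ → ℝ) (x : ℕ → ℝ) : Prop :=
  (∀ S ⊆ Finset.Icc 1 n, S ≠ Finset.Icc 1 n → pathNu n w S ≤ ∑ v ∈ S, x v) ∧
    ∑ v ∈ Finset.Icc 1 n, x v = pathNu n w (Finset.Icc 1 n)

lemma matching_card (a b : ℕ) (M : Finset ℕ) (hm : ∀ i ∈ M, a ≤ i ∧ i + 1 ≤ b)
    (hp : ∀ i ∈ M, ∀ j ∈ M, i ≠ j → i + 1 ≠ j ∧ j + 1 ≠ i) :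
    2 * M.card ≤ b + 1 - a := by
  have hdisj : Disjoint M (M.image (· + 1)) := by
    rw [Finset.disjoint_left]
    intro x hx hx'
    obtain ⟨j, hj, hjx⟩ := Finset.mem_image.mp hx'
    have hne : j ≠ x := by omega
    exact (hp j hj x hx hne).1 hjx
  have hsub : M ∪ M.image (· + 1) ⊆ Finset.Icc a b := by
    intro x hx
    rcases Finset.mem_union.mp hx with h | h
    · have := hm x h; exact Finset.mem_Icc.mpr (by omega)
    · obtain ⟨j, hj, hjx⟩ := Finset.mem_image.mp h
      have := hm j hj; exact Finset.mem_Icc.mpr (by omega)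
  have h1 := Finset.card_le_card hsub
  rw [Finset.card_union_of_disjoint hdisj,
    Finset.card_image_of_injective _ (add_left_injective 1), Nat.card_Icc] at h1
  omega

lemma pathNu_eq (n : ℕ) (w : ℕ → ℝ) (S : Finset ℕ) (c : ℝ)
    (hub : ∀ M : Finset ℕ, PathMatching n S M → ∑ i ∈ M, w i ≤ c)
    (hex : ∃ M : Finset ℕ, PathMatching n S M ∧ ∑ i ∈ M, w i = c) :
    pathNu n w S = c := by
  obtain ⟨M, hM, hMs⟩ := hex
  apply le_antisymm
  · exact csSup_le ⟨_, M, hM, rfl⟩ (by rintro t ⟨M', hM', rfl⟩; exact hub M' hM')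
  · exact le_csSup ⟨c, by rintro t ⟨M', hM', rfl⟩; exact hub M' hM'⟩ ⟨M, hM, hMs.symm⟩

def arithM (a k : ℕ) : Finset ℕ := (Finset.range k).image (fun j => a + 2 * j)

lemma arith_pm (n s t a k : ℕ) (h1 : 1 ≤ a) (h2 : a + 2 * k ≤ t + 1) (h3 : t ≤ n)
    (h4 : s ≤ a) : PathMatching n (Finset.Icc s t) (arithM a k) := by
  refine ⟨?_, ?_, ?_⟩
  · intro x hx
    obtain ⟨j, hj, rfl⟩ := Finset.mem_image.mp hx
    rw [Finset.mem_range] at hj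
    exact Finset.mem_Icc.mpr (by omega)
  · intro x hx
    obtain ⟨j, hj, rfl⟩ := Finset.mem_image.mp hx
    rw [Finset.mem_range] at hj
    exact ⟨Finset.mem_Icc.mpr (by omega), Finset.mem_Icc.mpr (by omega)⟩
  · intro x hx y hy hxy
    obtain ⟨j, hj, rfl⟩ := Finset.mem_image.mp hx
    obtain ⟨j', hj', rfl⟩ := Finset.mem_image.mp hy
    omega

lemma arith_sum (w : ℕ → ℝ) (a k : ℕ) (h : ∀ j < k, w (a + 2 * j) = 1) :
    ∑ i ∈ arithM a k, w i = k := by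
  rw [arithM, Finset.sum_image (by intro x _ y _ h; simp only at h; omega)]
  rw [Finset.sum_congr rfl (fun j hj => h j (Finset.mem_range.mp hj))]
  simp

lemma pathNu_w (n s t : ℕ) (w : ℕ → ℝ) (hw : ∀ i ∈ Finset.Icc 1 (n - 1), w i = 1)
    (hs : 1 ≤ s) (hst : s ≤ t) (ht : t ≤ n) :
    pathNu n w (Finset.Icc s t) = ((t + 1 - s) / 2 : ℕ) := by
  apply pathNu_eq
  · rintro M ⟨hsub, hadj, hp⟩
    have hm : ∀ i ∈ M, s ≤ i ∧ i + 1 ≤ t := by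
      intro i hi
      have h1 := Finset.mem_Icc.mp (hadj i hi).1
      have h2 := Finset.mem_Icc.mp (hadj i hi).2
      omega
    have hcard := matching_card s t M hm hp
    have hsum : ∑ i ∈ M, w i = M.card := by
      rw [Finset.sum_congr rfl (fun i hi => hw i (hsub hi))]; simp
    rw [hsum]
    exact_mod_cast Nat.cast_le.mpr (by omega : M.card ≤ (t + 1 - s) / 2)
  · refine ⟨arithM s ((t + 1 - s) / 2), arith_pm n s t s _ hs (by omega) ht le_rfl, ?_⟩
    apply arith_sum
    intro j hj
    apply hw
    exact Finset.mem_Icc.mpr (by omega)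

lemma pathNu_w' (n s t : ℕ) (w' : ℕ → ℝ)
    (hw' : ∀ i ∈ Finset.Icc 1 (n - 1), w' i = if i = 1 ∨ i = n - 1 then 0 else 1)
    (hn : 5 ≤ n) (hs : 1 ≤ s) (hst : s ≤ t) (ht : t ≤ n) :
    pathNu n w' (Finset.Icc s t) = ((min t (n - 1) + 1 - max s 2) / 2 : ℕ) := by
  apply pathNu_eq
  · rintro M ⟨hsub, hadj, hp⟩
    set M' := M.filter (fun i => ¬(i = 1 ∨ i = n - 1)) with hM'
    have hsum : ∑ i ∈ M, w' i = M'.card := by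
      rw [Finset.sum_congr rfl (fun i hi => hw' i (hsub hi)), Finset.sum_ite,
        Finset.sum_const, Finset.sum_const]
      simp [hM']
    have hm : ∀ i ∈ M', max s 2 ≤ i ∧ i + 1 ≤ min t (n - 1) := by
      intro i hi
      rw [hM', Finset.mem_filter] at hi
      have h1 := Finset.mem_Icc.mp (hadj i hi.1).1
      have h2 := Finset.mem_Icc.mp (hadj i hi.1).2
      have h3 := Finset.mem_Icc.mp (hsub hi.1)
      have h4 := hi.2
      omega
    have hp' : ∀ i ∈ M', ∀ j ∈ M', i ≠ j → i + 1 ≠ j ∧ j + 1 ≠ i := by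
      intro i hi j hj
      exact hp i (Finset.mem_of_mem_filter i hi) j (Finset.mem_of_mem_filter j hj)
    have hcard := matching_card _ _ M' hm hp'
    rw [hsum]
    exact_mod_cast Nat.cast_le.mpr
      (by omega : M'.card ≤ (min t (n - 1) + 1 - max s 2) / 2)
  · refine ⟨arithM (max s 2) ((min t (n - 1) + 1 - max s 2) / 2),
      arith_pm n s t _ _ (by omega) (by omega) ht (by omega), ?_⟩
    apply arith_sum
    intro j hj
    rw [hw' _ (Finset.mem_Icc.mpr (by omega))]
    rw [if_neg (by omega)]

lemma core_values (n : ℕ) (hn : 5 ≤ n) (w : ℕ → ℝ) (x : ℕ → ℝ) (hx : InCore n w x)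
    (g : ℕ → ℝ) (hg0 : g 0 = 0)
    (h1 : ∀ m, 1 ≤ m → m < n → pathNu n w (Finset.Icc 1 m) = g m)
    (h2 : ∀ m, 1 ≤ m → m < n → pathNu n w (Finset.Icc (m + 1) n) = g n - g m)
    (h3 : pathNu n w (Finset.Icc 1 n) = g n) :
    ∀ v ∈ Finset.Icc 1 n, x v = g v - g (v - 1) := by
  have hsn : ∑ v ∈ Finset.Icc 1 n, x v = g n := hx.2.trans h3
  have hs : ∀ m, 1 ≤ m → m ≤ n → ∑ v ∈ Finset.Icc 1 m, x v = g m := by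
    intro m hm1 hmn
    rcases eq_or_lt_of_le hmn with rfl | hlt
    · exact hsn
    · have hsplit : (∑ v ∈ Finset.Icc 1 m, x v) + (∑ v ∈ Finset.Icc (m + 1) n, x v)
          = ∑ v ∈ Finset.Icc 1 n, x v := by
        rw [show Finset.Icc (m + 1) n = Finset.Ioc m n from Finset.Icc_add_one_left_eq_Ioc m n,
          show Finset.Icc 1 m = Finset.Ioc 0 m from Finset.Icc_add_one_left_eq_Ioc 0 m,
          show Finset.Icc 1 n = Finset.Ioc 0 n from Finset.Icc_add_one_left_eq_Ioc 0 n]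
        exact Finset.sum_Ioc_consecutive x (by omega) (by omega)
      have ha : g m ≤ ∑ v ∈ Finset.Icc 1 m, x v := by
        rw [← h1 m hm1 hlt]
        apply hx.1
        · exact Finset.Icc_subset_Icc le_rfl (le_of_lt hlt)
        · intro h
          have h5 : n ∈ Finset.Icc 1 n := Finset.mem_Icc.mpr ⟨by omega, le_rfl⟩
          rw [← h, Finset.mem_Icc] at h5; omega
      have hb : g n - g m ≤ ∑ v ∈ Finset.Icc (m + 1) n, x v := by
        rw [← h2 m hm1 hlt]
        apply hx.1
        · exact Finset.Icc_subset_Icc (by omega) le_rfl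
        · intro h
          have h5 : (1 : ℕ) ∈ Finset.Icc 1 n := Finset.mem_Icc.mpr ⟨le_rfl, by omega⟩
          rw [← h, Finset.mem_Icc] at h5; omega
      linarith
  intro v hv
  rw [Finset.mem_Icc] at hv
  rcases eq_or_lt_of_le hv.1 with rfl | hv2
  · have := hs 1 le_rfl (by omega)
    rw [Finset.Icc_self, Finset.sum_singleton] at this
    simp [this, hg0]
  · have e1 := hs v (by omega) hv.2
    have e2 := hs (v - 1) (by omega) (by omega)
    have hsp : ∑ u ∈ Finset.Icc 1 v, x u = (∑ u ∈ Finset.Icc 1 (v - 1), x u) + x v := by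
      conv_lhs => rw [show v = (v - 1) + 1 by omega]
      rw [Finset.sum_Icc_succ_top (by omega), show v - 1 + 1 = v by omega]
    linarith

theorem stmt_6 (n : ℕ) (hn : 5 ≤ n) (hodd : Odd n)
    (w w' : ℕ → ℝ)
    (hw : ∀ i ∈ Finset.Icc 1 (n - 1), w i = 1)
    (hw' : ∀ i ∈ Finset.Icc 1 (n - 1), w' i = if i = 1 ∨ i = n - 1 then 0 else 1) :
    (∀ x : ℕ → ℝ, InCore n w x →
        ∀ v ∈ Finset.Icc 1 n, x v = if Even v then 1 else 0) ∧
    (∀ x : ℕ → ℝ, InCore n w' x →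
        ∀ v ∈ Finset.Icc 1 n, x v = if ¬ Even v ∧ v ≠ 1 ∧ v ≠ n then 1 else 0) ∧
    (∀ A : (ℕ → ℝ) → (ℕ → ℝ), InCore n w (A w) → InCore n w' (A w') →
        (∑ v ∈ Finset.Icc 1 n, |A w v - A w' v|) /
            (∑ i ∈ Finset.Icc 1 (n - 1), |w i - w' i|) = ((n : ℝ) - 2) / 2) := by
  obtain ⟨K, hK⟩ := hodd
  have P1 : ∀ x : ℕ → ℝ, InCore n w x →
      ∀ v ∈ Finset.Icc 1 n, x v = if Even v then 1 else 0 := by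
    intro x hx v hv
    have g1 : ∀ m, 1 ≤ m → m < n →
        pathNu n w (Finset.Icc 1 m) = ((m / 2 : ℕ) : ℝ) := by
      intro m hm1 hmn
      rw [pathNu_w n 1 m w hw le_rfl hm1 (by omega), show m + 1 - 1 = m by omega]
    have g2 : ∀ m, 1 ≤ m → m < n →
        pathNu n w (Finset.Icc (m + 1) n) = ((n / 2 : ℕ) : ℝ) - ((m / 2 : ℕ) : ℝ) := by
      intro m hm1 hmn
      rw [pathNu_w n (m + 1) n w hw (by omega) (by omega) le_rfl]
      have harith : (n + 1 - (m + 1)) / 2 + m / 2 = n / 2 := by omega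
      have hc := congrArg (Nat.cast : ℕ → ℝ) harith
      rw [Nat.cast_add] at hc
      linarith
    have g3 : pathNu n w (Finset.Icc 1 n) = ((n / 2 : ℕ) : ℝ) := by
      rw [pathNu_w n 1 n w hw le_rfl (by omega) le_rfl, show n + 1 - 1 = n by omega]
    have key := core_values n hn w x hx (fun m => ((m / 2 : ℕ) : ℝ)) (by norm_num)
      g1 g2 g3 v hv
    rw [key]
    rw [Finset.mem_Icc] at hv
    rcases Nat.even_or_odd v with he | ho
    · rw [if_pos he]
      obtain ⟨k, hk⟩ := he
      have harith : (v - 1) / 2 + 1 = v / 2 := by omega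
      have hc := congrArg (Nat.cast : ℕ → ℝ) harith
      push_cast at hc
      linarith
    · rw [if_neg (Nat.not_even_iff_odd.mpr ho)]
      obtain ⟨k, hk⟩ := ho
      rw [show (v - 1) / 2 = v / 2 by omega]
      ring
  have P2 : ∀ x : ℕ → ℝ, InCore n w' x →
      ∀ v ∈ Finset.Icc 1 n, x v = if ¬ Even v ∧ v ≠ 1 ∧ v ≠ n then 1 else 0 := by
    intro x hx v hv
    set g : ℕ → ℝ := fun m =>
      if m = n then (((n - 3) / 2 : ℕ) : ℝ) else (((m - 1) / 2 : ℕ) : ℝ) with hg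
    have g1 : ∀ m, 1 ≤ m → m < n → pathNu n w' (Finset.Icc 1 m) = g m := by
      intro m hm1 hmn
      rw [pathNu_w' n 1 m w' hw' hn le_rfl hm1 (by omega), hg]
      simp only [if_neg (by omega : ¬ m = n)]
      exact Nat.cast_inj.mpr (by omega)
    have g2 : ∀ m, 1 ≤ m → m < n →
        pathNu n w' (Finset.Icc (m + 1) n) = g n - g m := by
      intro m hm1 hmn
      rw [pathNu_w' n (m + 1) n w' hw' hn (by omega) (by omega) le_rfl, hg]
      simp only [eq_self_iff_true, if_true, if_neg (by omega : ¬ m = n)]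
      have harith : (m - 1) / 2 + (min n (n - 1) + 1 - max (m + 1) 2) / 2
          = (n - 3) / 2 := by omega
      have hc := congrArg (Nat.cast : ℕ → ℝ) harith
      rw [Nat.cast_add] at hc
      linarith
    have g3 : pathNu n w' (Finset.Icc 1 n) = g n := by
      rw [pathNu_w' n 1 n w' hw' hn le_rfl (by omega) le_rfl, hg]
      simp only [eq_self_iff_true, if_true]
      exact Nat.cast_inj.mpr (by omega)
    have key := core_values n hn w' x hx g (by rw [hg]; simp only [if_neg (by omega : ¬ (0:ℕ) = n)]; norm_num)
      g1 g2 g3 v hv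
    rw [key, hg]
    rw [Finset.mem_Icc] at hv
    by_cases hvn : v = n
    · subst hvn
      simp only [eq_self_iff_true, if_true, if_neg (by omega : ¬ v - 1 = v)]
      rw [if_neg (by tauto : ¬ (¬ Even v ∧ v ≠ 1 ∧ v ≠ v))]
      rw [show (v - 1 - 1) / 2 = (v - 3) / 2 by omega]
      ring
    · simp only [if_neg hvn, if_neg (by omega : ¬ v - 1 = n)]
      rcases Nat.even_or_odd v with he | ho
      · rw [if_neg (by tauto : ¬ (¬ Even v ∧ v ≠ 1 ∧ v ≠ n))]
        obtain ⟨k, hk⟩ := he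
        rw [show (v - 1 - 1) / 2 = (v - 1) / 2 by omega]
        ring
      · have hnv : ¬ Even v := Nat.not_even_iff_odd.mpr ho
        obtain ⟨k, hk⟩ := ho
        by_cases hv1 : v = 1
        · subst hv1
          rw [if_neg (by tauto : ¬ (¬ Even 1 ∧ (1:ℕ) ≠ 1 ∧ (1:ℕ) ≠ n))]
          norm_num
        · rw [if_pos ⟨hnv, hv1, hvn⟩]
          have harith : (v - 1 - 1) / 2 + 1 = (v - 1) / 2 := by omega
          have hc := congrArg (Nat.cast : ℕ → ℝ) harith
          push_cast at hc
          linarith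
  refine ⟨P1, P2, ?_⟩
  intro A hA1 hA2
  have e1 := P1 (A w) hA1
  have e2 := P2 (A w') hA2
  have hnum : ∑ v ∈ Finset.Icc 1 n, |A w v - A w' v| = (n : ℝ) - 2 := by
    have hterm : ∀ v ∈ Finset.Icc 1 n,
        |A w v - A w' v| = if v = 1 ∨ v = n then (0 : ℝ) else 1 := by
      intro v hv
      rw [e1 v hv, e2 v hv]
      rcases Nat.even_or_odd v with he | ho
      · have h1 : v ≠ 1 := by obtain ⟨k, hk⟩ := he; omega
        have h2 : v ≠ n := by obtain ⟨k, hk⟩ := he; omega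
        rw [if_pos he, if_neg (by tauto), if_neg (by tauto)]
        norm_num
      · have hnv : ¬ Even v := Nat.not_even_iff_odd.mpr ho
        rw [if_neg hnv]
        by_cases h1 : v = 1
        · rw [if_neg (by tauto), if_pos (Or.inl h1)]; norm_num
        · by_cases h2 : v = n
          · rw [if_neg (by tauto), if_pos (Or.inr h2)]; norm_num
          · rw [if_pos ⟨hnv, h1, h2⟩, if_neg (by tauto)]; norm_num
    rw [Finset.sum_congr rfl hterm, Finset.sum_ite, Finset.sum_const, Finset.sum_const]
    have hfil : (Finset.Icc 1 n).filter (fun v => ¬(v = 1 ∨ v = n))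
        = Finset.Icc 2 (n - 1) := by
      ext v
      simp only [Finset.mem_filter, Finset.mem_Icc]
      omega
    rw [hfil, Nat.card_Icc, show n - 1 + 1 - 2 = n - 2 by omega]
    simp only [smul_zero, zero_add, nsmul_eq_mul, mul_one]
    rw [Nat.cast_sub (by omega)]
    norm_num
  have hden : ∑ i ∈ Finset.Icc 1 (n - 1), |w i - w' i| = 2 := by
    have hterm : ∀ i ∈ Finset.Icc 1 (n - 1),
        |w i - w' i| = if i = 1 ∨ i = n - 1 then (1 : ℝ) else 0 := by
      intro i hi
      rw [hw i hi, hw' i hi]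
      by_cases h : i = 1 ∨ i = n - 1
      · rw [if_pos h, if_pos h]; norm_num
      · rw [if_neg h, if_neg h]; norm_num
    rw [Finset.sum_congr rfl hterm, Finset.sum_ite, Finset.sum_const, Finset.sum_const]
    have hfil : (Finset.Icc 1 (n - 1)).filter (fun i => i = 1 ∨ i = n - 1)
        = {1, n - 1} := by
      ext i
      simp only [Finset.mem_filter, Finset.mem_Icc, Finset.mem_insert, Finset.mem_singleton]
      omega
    rw [hfil]
    rw [Finset.card_insert_of_notMem (by simp; omega), Finset.card_singleton]
    norm_num
  rw [hnum, hden]
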